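/- Let K_θ be a finite-dimensional model space and A_θ its bounded generator satisfying Im A_θ = (1/(4π)) ⟨·, g⟩ g where g = 1-θ. Let H be a bounded anti-linear operator on K_θ (the restriction of a Hankel operator) satisfying A_θ* H = H A_θ. Then A_θ H² - H² A_θ = (i/(2π)) ⟨·, H u⟩ g - (i/(2π)) ⟨·, u⟩ u, where u = H g. -/

import Mathlib

open ComplexConjugate

/-- Commutation relation for an anti-linear "Hankel" operator `H` on a finite-dimensional
model space: if `Im A = (1/(4π)) ⟨·,g⟩g` (inner products linear in the first factor, i.e.
`⟨f,g⟩ = ⟪g,f⟫` in Mathlib's convention), `H` is symmetric anti-linear and `A* H = H A`,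
then `A H² - H² A = (i/(2π)) ⟨·, H u⟩ g - (i/(2π)) ⟨·, u⟩ u` where `u = H g`. -/
theorem hankel_commutator_identity
    {E : Type*} [NormedAddCommGroup E] [InnerProductSpace ℂ E] [FiniteDimensional ℂ E]
    (A : E →ₗ[ℂ] E) (H : E →ₛₗ[starRingEnd ℂ] E) (g : E)
    (hIm : ∀ f : E, A f - (LinearMap.adjoint A) f
        = (Complex.I / (2 * (Real.pi : ℂ))) • ((inner ℂ g f : ℂ) • g))
    (hsym : ∀ f h : E, (inner ℂ h (H f) : ℂ) = inner ℂ f (H h))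
    (hcomm : ∀ f : E, (LinearMap.adjoint A) (H f) = H (A f)) :
    ∀ f : E, A (H (H f)) - H (H (A f))
      = (Complex.I / (2 * (Real.pi : ℂ))) • ((inner ℂ (H (H g)) f : ℂ) • g)
        - (Complex.I / (2 * (Real.pi : ℂ))) • ((inner ℂ (H g) f : ℂ) • H g) := by
  intro f
  set c : ℂ := Complex.I / (2 * (Real.pi : ℂ)) with hc
  have hcconj : (starRingEnd ℂ) c = -c := by
    rw [hc, map_div₀, Complex.conj_I, map_mul]
    simp [Complex.conj_ofReal, map_ofNat]
    ring
  have e1 : (inner ℂ g (H (H f)) : ℂ) = inner ℂ (H (H g)) f := by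
    rw [hsym (H f) g, ← inner_conj_symm, hsym f (H g), inner_conj_symm]
  have e2 : (starRingEnd ℂ) (inner ℂ g (H f) : ℂ) = inner ℂ (H g) f := by
    rw [hsym f g, inner_conj_symm]
  have hA2 : A (H f) = H (A f) + (c * (inner ℂ g (H f) : ℂ)) • g := by
    have h := hIm (H f)
    rw [hcomm f] at h
    rw [← smul_smul]
    exact sub_eq_iff_eq_add'.mp h
  have h1 : A (H (H f)) = H (A (H f)) + c • ((inner ℂ g (H (H f)) : ℂ) • g) := by
    have h := hIm (H (H f))
    rw [hcomm (H f)] at h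
    exact sub_eq_iff_eq_add'.mp h
  rw [h1, hA2, map_add, map_smulₛₗ, map_mul, hcconj, e2, e1]
  module
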